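/- Let T > 0 and let Θ be a mild solution of the critical dissipative quasi-geostrophic equation on [0,T] with data Θ₀, such that ∫₀^T ‖Θ(t)‖_{X¹} dt < ∞ and sup_{0≤t≤T} ‖Θ(t)‖_{X⁰} ≤ r₀ for some r₀ < 1. Then the function t ↦ ‖Θ(t)‖_{X⁰} is nonincreasing on [0,T]; in particular ‖Θ(t)‖_{X⁰} ≤ ‖Θ(s)‖_{X⁰} whenever 0 ≤ s ≤ t ≤ T. -/

import Mathlib

open MeasureTheory Filter
open scoped ENNReal NNReal

noncomputable section

abbrev E2 : Type := EuclideanSpace ℝ (Fin 2)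

/-- Fourier-side `X^σ` norm: `∫ |ξ|^σ |g ξ| dξ` (valued in `ℝ≥0∞`). -/
def Xnorm (σ : ℝ) (g : E2 → ℂ) : ℝ≥0∞ :=
  ∫⁻ ξ : E2, ENNReal.ofReal (‖ξ‖ ^ σ) * ‖g ξ‖₊

/-- Fourier-side quasi-geostrophic nonlinearity `N[Θ]`. -/
def QGN (Θ : ℝ → E2 → ℂ) (z : ℝ) (ξ : E2) : ℂ :=
  ∫ η : E2, (((ξ 0 * η 1 - ξ 1 * η 0) / ‖η‖ : ℝ) : ℂ) * Θ z (ξ - η) * Θ z η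

/-- `Θ` is a mild solution on `[0,T]` with data `Θ₀`. -/
def IsMildSolutionOn (Θ : ℝ → E2 → ℂ) (Θ₀ : E2 → ℂ) (T : ℝ) : Prop :=
  ∀ t ∈ Set.Icc (0:ℝ) T, ∀ᵐ ξ : E2 ∂volume, Θ t ξ =
    ((Real.exp (-(t * ‖ξ‖)) : ℝ) : ℂ) * Θ₀ ξ +
    ∫ z in (0:ℝ)..t, ((Real.exp (-((t - z) * ‖ξ‖)) : ℝ) : ℂ) * QGN Θ z ξ

/-- `Θ` is a global mild solution with data `Θ₀`. -/
def IsGlobalMildSolution (Θ : ℝ → E2 → ℂ) (Θ₀ : E2 → ℂ) : Prop :=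
  ∀ t : ℝ, 0 ≤ t → ∀ᵐ ξ : E2 ∂volume, Θ t ξ =
    ((Real.exp (-(t * ‖ξ‖)) : ℝ) : ℂ) * Θ₀ ξ +
    ∫ z in (0:ℝ)..t, ((Real.exp (-((t - z) * ‖ξ‖)) : ℝ) : ℂ) * QGN Θ z ξ

/-- `Θ ∈ C_b([0,∞), X^σ)`: bounded `X^σ` norm and `L¹`-continuity of `t ↦ |·|^σ Θ(t,·)`. -/
def CbX (σ : ℝ) (Θ : ℝ → E2 → ℂ) : Prop :=
  (⨆ t ∈ Set.Ici (0:ℝ), Xnorm σ (Θ t)) < ⊤ ∧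
  ∀ t ∈ Set.Ici (0:ℝ),
    Tendsto (fun s => ∫⁻ ξ : E2, ENNReal.ofReal (‖ξ‖ ^ σ) * ‖Θ s ξ - Θ t ξ‖₊)
      (nhdsWithin t (Set.Ici 0)) (nhds 0)



section AuxProofs

variable {Θ : ℝ → E2 → ℂ}

lemma cross_le (a b : E2) : |a 0 * b 1 - a 1 * b 0| ≤ ‖a‖ * ‖b‖ := by
  have ha : ‖a‖ = Real.sqrt (a 0 ^ 2 + a 1 ^ 2) := by
    rw [EuclideanSpace.norm_eq]; simp [Fin.sum_univ_two, Real.norm_eq_abs, sq_abs]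
  have hb : ‖b‖ = Real.sqrt (b 0 ^ 2 + b 1 ^ 2) := by
    rw [EuclideanSpace.norm_eq]; simp [Fin.sum_univ_two, Real.norm_eq_abs, sq_abs]
  rw [ha, hb, ← Real.sqrt_mul (by positivity)]
  rw [← Real.sqrt_sq_eq_abs]
  apply Real.sqrt_le_sqrt
  nlinarith [sq_nonneg (a 0 * b 0 + a 1 * b 1)]

lemma kernel_le (ξ η : E2) : |(ξ 0 * η 1 - ξ 1 * η 0) / ‖η‖| ≤ ‖ξ - η‖ := by
  rcases eq_or_ne η 0 with h | h
  · simp [h]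
  · have hη : 0 < ‖η‖ := norm_pos_iff.mpr h
    rw [abs_div, abs_of_pos hη, div_le_iff₀ hη]
    have : ξ 0 * η 1 - ξ 1 * η 0 = (ξ - η) 0 * η 1 - (ξ - η) 1 * η 0 := by
      simp [PiLp.sub_apply]; ring
    rw [this]
    exact cross_le _ _

variable {Θ : ℝ → E2 → ℂ}

lemma measurable_coord (i : Fin 2) : Measurable fun ξ : E2 => ξ i :=
  (EuclideanSpace.proj i).continuous.measurable

lemma measurable_QGN (hmeas : Measurable (Function.uncurry Θ)) :
    Measurable (Function.uncurry (QGN Θ)) := by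
  have h : StronglyMeasurable fun p : (ℝ × E2) × E2 =>
      (((p.1.2 0 * p.2 1 - p.1.2 1 * p.2 0) / ‖p.2‖ : ℝ) : ℂ) * Θ p.1.1 (p.1.2 - p.2) * Θ p.1.1 p.2 := by
    apply Measurable.stronglyMeasurable
    refine ((Complex.measurable_ofReal.comp
      (((((measurable_coord 0).comp (measurable_fst.snd)).mul
          ((measurable_coord 1).comp measurable_snd)).sub
          (((measurable_coord 1).comp (measurable_fst.snd)).mul
          ((measurable_coord 0).comp measurable_snd))).div
          measurable_snd.norm)).mul
      (hmeas.comp ((measurable_fst.fst).prodMk ((measurable_fst.snd).sub measurable_snd)))).mul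
      (hmeas.comp ((measurable_fst.fst).prodMk measurable_snd))
  exact (h.integral_prod_right').measurable

lemma measurable_theta (hmeas : Measurable (Function.uncurry Θ)) (z : ℝ) :
    Measurable (Θ z) := hmeas.comp (measurable_const.prodMk measurable_id)

lemma qgn_bound (z : ℝ) (ξ : E2) :
    (‖QGN Θ z ξ‖₊ : ℝ≥0∞) ≤
      ∫⁻ η : E2, ENNReal.ofReal ‖ξ - η‖ * ‖Θ z (ξ - η)‖₊ * ‖Θ z η‖₊ := by
  refine le_trans (enorm_integral_le_lintegral_enorm _) (lintegral_mono fun η => ?_)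
  rw [enorm_eq_nnnorm, nnnorm_mul, nnnorm_mul, ENNReal.coe_mul, ENNReal.coe_mul]
  gcongr
  rw [Complex.nnnorm_real, ← enorm_eq_nnnorm, Real.enorm_eq_ofReal_abs]
  exact ENNReal.ofReal_le_ofReal (kernel_le ξ η)

lemma Xnorm_zero_eq (g : E2 → ℂ) : Xnorm 0 g = ∫⁻ ξ : E2, (‖g ξ‖₊ : ℝ≥0∞) := by
  simp [Xnorm, Real.rpow_zero]

lemma Xnorm_one_eq (g : E2 → ℂ) : Xnorm 1 g = ∫⁻ ξ : E2, ENNReal.ofReal ‖ξ‖ * ‖g ξ‖₊ := by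
  simp [Xnorm, Real.rpow_one]

lemma S_bound (hmeas : Measurable (Function.uncurry Θ)) (z : ℝ) :
    (∫⁻ ξ : E2, (‖QGN Θ z ξ‖₊ : ℝ≥0∞)) ≤ Xnorm 1 (Θ z) * Xnorm 0 (Θ z) := by
  have mz := measurable_theta hmeas z
  calc (∫⁻ ξ : E2, (‖QGN Θ z ξ‖₊ : ℝ≥0∞))
      ≤ ∫⁻ ξ : E2, ∫⁻ η : E2, ENNReal.ofReal ‖ξ - η‖ * ‖Θ z (ξ - η)‖₊ * ‖Θ z η‖₊ :=
        lintegral_mono fun ξ => qgn_bound z ξ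
    _ = ∫⁻ η : E2, ∫⁻ ξ : E2, ENNReal.ofReal ‖ξ - η‖ * ‖Θ z (ξ - η)‖₊ * ‖Θ z η‖₊ := by
        apply lintegral_lintegral_swap
        apply Measurable.aemeasurable
        refine ((ENNReal.measurable_ofReal.comp ((measurable_fst.sub measurable_snd).norm)).mul
          ((mz.comp (measurable_fst.sub measurable_snd)).nnnorm.coe_nnreal_ennreal)).mul
          ((mz.comp measurable_snd).nnnorm.coe_nnreal_ennreal)
    _ = ∫⁻ η : E2, (∫⁻ ξ : E2, ENNReal.ofReal ‖ξ - η‖ * ‖Θ z (ξ - η)‖₊) * ‖Θ z η‖₊ := by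
        congr 1; ext η
        rw [← lintegral_mul_const' _ _ (by simp : (‖Θ z η‖₊:ℝ≥0∞) ≠ ⊤)]
    _ = ∫⁻ η : E2, Xnorm 1 (Θ z) * ‖Θ z η‖₊ := by
        congr 1; ext η
        rw [Xnorm_one_eq]
        congr 1
        exact lintegral_sub_right_eq_self (fun ξ => ENNReal.ofReal ‖ξ‖ * ‖Θ z ξ‖₊) η
    _ = Xnorm 1 (Θ z) * Xnorm 0 (Θ z) := by
        rw [Xnorm_zero_eq, lintegral_const_mul _ mz.nnnorm.coe_nnreal_ennreal]

lemma lint_exp (c : ℝ) (hc : 0 ≤ c) {a b : ℝ} (hab : a ≤ b) :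
    (∫⁻ z in Set.Ioc a b, ENNReal.ofReal (c * Real.exp (-((z - a) * c)))) =
      ENNReal.ofReal (1 - Real.exp (-((b - a) * c))) := by
  have hcont : Continuous fun z : ℝ => c * Real.exp (-((z - a) * c)) :=
    continuous_const.mul (((continuous_id.sub continuous_const).mul continuous_const).neg.rexp)
  rw [← ofReal_integral_eq_lintegral_ofReal (hcont.integrableOn_Ioc)
    (Filter.Eventually.of_forall fun z => by positivity)]
  congr 1
  rw [← intervalIntegral.integral_of_le hab]
  have hderiv : ∀ x ∈ Set.uIcc a b, HasDerivAt (fun z => -Real.exp (-((z - a) * c)))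
      (c * Real.exp (-((x - a) * c))) x := by
    intro x _
    have h1 : HasDerivAt (fun z : ℝ => -((z - a) * c)) (-c) x := by
      simpa using (((hasDerivAt_id x).sub_const a).mul_const c).fun_neg
    have h2 := h1.exp
    have h3 := h2.fun_neg
    exact h3.congr_deriv (by ring)
  rw [intervalIntegral.integral_eq_sub_of_hasDerivAt hderiv (hcont.intervalIntegrable a b)]
  simp [Real.exp_zero]
  ring

set_option maxHeartbeats 1000000 in
lemma pointwise_bound {T : ℝ} {Θ₀ : E2 → ℂ} {Θ : ℝ → E2 → ℂ}
    (hmeas : Measurable (Function.uncurry Θ))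
    (hmild : IsMildSolutionOn Θ Θ₀ T)
    (hJ : ∀ᵐ ξ : E2, (∫⁻ z in Set.Ioc 0 T, (‖QGN Θ z ξ‖₊ : ℝ≥0∞)) < ⊤)
    {s t : ℝ} (hs : 0 ≤ s) (hst : s ≤ t) (ht : t ≤ T) :
    ∀ᵐ ξ : E2, (‖Θ t ξ‖₊ : ℝ≥0∞) ≤
      ENNReal.ofReal (Real.exp (-((t - s) * ‖ξ‖))) * ‖Θ s ξ‖₊ +
      ∫⁻ z in Set.Ioc s t, ENNReal.ofReal (Real.exp (-((t - z) * ‖ξ‖))) * ‖QGN Θ z ξ‖₊ := by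
  have ht0 : (0:ℝ) ≤ t := hs.trans hst
  filter_upwards [hmild t ⟨ht0, ht⟩, hmild s ⟨hs, hst.trans ht⟩, hJ] with ξ hmt hms hJξ
  -- integrability
  have hNmeas : Measurable fun z => QGN Θ z ξ :=
    (measurable_QGN hmeas).of_uncurry_right
  have hIntN : IntegrableOn (fun z => QGN Θ z ξ) (Set.Ioc 0 T) := by
    refine ⟨hNmeas.aestronglyMeasurable, hJξ⟩
  have II : ∀ τ a b : ℝ, 0 ≤ a → a ≤ b → b ≤ T →
      IntervalIntegrable (fun z => ((Real.exp (-((τ - z) * ‖ξ‖)) : ℝ) : ℂ) * QGN Θ z ξ)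
        volume a b := by
    intro τ a b ha hab hb
    rw [intervalIntegrable_iff, Set.uIoc_of_le hab]
    refine Integrable.bdd_mul (c := Real.exp ((|τ| + |a| + |b|) * ‖ξ‖))
      (hIntN.mono_set (Set.Ioc_subset_Ioc ha hb))
      (Continuous.aestronglyMeasurable (by continuity)) ?_
    rw [ae_restrict_iff' measurableSet_Ioc]
    refine Filter.Eventually.of_forall fun z hz => ?_
    rw [Complex.norm_real, Real.norm_eq_abs, Real.abs_exp]
    apply Real.exp_le_exp.mpr
    have h1 : -(τ - z) ≤ |τ| + |a| + |b| := by
      have := hz.2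
      have := abs_nonneg a
      have h2 : z ≤ |b| := hz.2.trans (le_abs_self b)
      have h3 : -τ ≤ |τ| := neg_le_abs τ
      linarith
    nlinarith [norm_nonneg ξ, abs_nonneg τ, abs_nonneg a, abs_nonneg b, neg_le_abs τ,
      hz.2.trans (le_abs_self b)]
  -- semigroup identity
  have key : Θ t ξ = ((Real.exp (-((t - s) * ‖ξ‖)) : ℝ) : ℂ) * Θ s ξ +
      ∫ z in s..t, ((Real.exp (-((t - z) * ‖ξ‖)) : ℝ) : ℂ) * QGN Θ z ξ := by
    have hsplit := intervalIntegral.integral_add_adjacent_intervals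
      (II t 0 s le_rfl hs (hst.trans ht)) (II t s t hs hst ht)
    have hfac : ∀ z : ℝ, ((Real.exp (-((t - z) * ‖ξ‖)) : ℝ) : ℂ) * QGN Θ z ξ =
        ((Real.exp (-((t - s) * ‖ξ‖)) : ℝ) : ℂ) *
          (((Real.exp (-((s - z) * ‖ξ‖)) : ℝ) : ℂ) * QGN Θ z ξ) := by
      intro z
      rw [← mul_assoc, ← Complex.ofReal_mul, ← Real.exp_add]
      ring_nf
    have h1 : (∫ z in (0:ℝ)..s, ((Real.exp (-((t - z) * ‖ξ‖)) : ℝ) : ℂ) * QGN Θ z ξ) =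
        ((Real.exp (-((t - s) * ‖ξ‖)) : ℝ) : ℂ) *
          ∫ z in (0:ℝ)..s, ((Real.exp (-((s - z) * ‖ξ‖)) : ℝ) : ℂ) * QGN Θ z ξ := by
      simp_rw [hfac]
      exact intervalIntegral.integral_const_mul _ _
    have hexp : ((Real.exp (-(t * ‖ξ‖)) : ℝ) : ℂ) =
        ((Real.exp (-((t - s) * ‖ξ‖)) : ℝ) : ℂ) * ((Real.exp (-(s * ‖ξ‖)) : ℝ) : ℂ) := by
      rw [← Complex.ofReal_mul, ← Real.exp_add]
      ring_nf
    have hs' : (∫ z in (0:ℝ)..s, ((Real.exp (-((s - z) * ‖ξ‖)) : ℝ) : ℂ) * QGN Θ z ξ) =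
        Θ s ξ - ((Real.exp (-(s * ‖ξ‖)) : ℝ) : ℂ) * Θ₀ ξ := by
      rw [hms]; ring
    rw [hmt, ← hsplit, h1, hs', hexp]
    ring
  -- norm bound
  calc (‖Θ t ξ‖₊ : ℝ≥0∞) ≤
      (‖((Real.exp (-((t - s) * ‖ξ‖)) : ℝ) : ℂ) * Θ s ξ‖₊ : ℝ≥0∞) +
        ‖∫ z in s..t, ((Real.exp (-((t - z) * ‖ξ‖)) : ℝ) : ℂ) * QGN Θ z ξ‖₊ := by
        rw [key]; exact_mod_cast nnnorm_add_le _ _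
    _ ≤ ENNReal.ofReal (Real.exp (-((t - s) * ‖ξ‖))) * ‖Θ s ξ‖₊ +
      ∫⁻ z in Set.Ioc s t, ENNReal.ofReal (Real.exp (-((t - z) * ‖ξ‖))) * ‖QGN Θ z ξ‖₊ := by
        gcongr
        · rw [nnnorm_mul, ENNReal.coe_mul, Complex.nnnorm_real, ← enorm_eq_nnnorm,
            Real.enorm_eq_ofReal (Real.exp_pos _).le]
        · rw [intervalIntegral.integral_of_le hst]
          refine le_trans (enorm_integral_le_lintegral_enorm _) (lintegral_mono fun z => ?_)
          rw [enorm_eq_nnnorm, nnnorm_mul, ENNReal.coe_mul, Complex.nnnorm_real, ← enorm_eq_nnnorm,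
            Real.enorm_eq_ofReal (Real.exp_pos _).le]

end AuxProofs

/-- if a mild solution stays below some `r₀ < 1` in `X⁰` on `[0,T]`,
then `t ↦ ‖Θ(t)‖_{X⁰}` is nonincreasing on `[0,T]`. -/
theorem qg_X0_norm_nonincreasing (T : ℝ) (hT : 0 < T) (Θ₀ : E2 → ℂ)
    (hmeas₀ : Measurable Θ₀)
    (Θ : ℝ → E2 → ℂ) (hmeas : Measurable (Function.uncurry Θ))
    (hmild : IsMildSolutionOn Θ Θ₀ T)
    (hint : (∫⁻ t in Set.Icc (0:ℝ) T, Xnorm 1 (Θ t)) < ⊤)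
    (r₀ : ℝ≥0∞) (hr₀ : r₀ < 1)
    (hbound : ∀ t ∈ Set.Icc (0:ℝ) T, Xnorm 0 (Θ t) ≤ r₀) :
    AntitoneOn (fun t => Xnorm 0 (Θ t)) (Set.Icc (0:ℝ) T) := by
  have mN := measurable_QGN hmeas
  have mK : Measurable fun p : ℝ × E2 => (‖QGN Θ p.1 p.2‖₊ : ℝ≥0∞) := by
    have h := mN.nnnorm.coe_nnreal_ennreal; simpa [Function.uncurry] using h
  have mKswap : Measurable fun p : E2 × ℝ => (‖QGN Θ p.2 p.1‖₊ : ℝ≥0∞) := by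
    have h := mK.comp ((measurable_snd.prodMk measurable_fst) :
      Measurable fun p : E2 × ℝ => (p.2, p.1))
    simpa [Function.comp_def] using h
  -- a.e. finiteness of the time integral of ‖N‖
  have hSle : ∀ z ∈ Set.Icc (0:ℝ) T, (∫⁻ ξ : E2, (‖QGN Θ z ξ‖₊ : ℝ≥0∞)) ≤ Xnorm 1 (Θ z) := by
    intro z hz
    refine (S_bound hmeas z).trans ?_
    calc Xnorm 1 (Θ z) * Xnorm 0 (Θ z) ≤ Xnorm 1 (Θ z) * 1 :=
          mul_le_mul_right ((hbound z hz).trans hr₀.le) _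
      _ = Xnorm 1 (Θ z) := mul_one _
  have hJ : ∀ᵐ ξ : E2, (∫⁻ z in Set.Ioc 0 T, (‖QGN Θ z ξ‖₊ : ℝ≥0∞)) < ⊤ := by
    apply ae_lt_top (mKswap.lintegral_prod_right')
    have hswap : (∫⁻ ξ : E2, ∫⁻ z in Set.Ioc 0 T, (‖QGN Θ z ξ‖₊ : ℝ≥0∞)) =
        ∫⁻ z in Set.Ioc 0 T, ∫⁻ ξ : E2, (‖QGN Θ z ξ‖₊ : ℝ≥0∞) :=
      lintegral_lintegral_swap mKswap.aemeasurable
    rw [hswap]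
    refine ne_of_lt (lt_of_le_of_lt ?_ hint)
    refine le_trans (setLIntegral_mono' measurableSet_Ioc fun z hz =>
      hSle z ⟨hz.1.le, hz.2⟩) (lintegral_mono_set Set.Ioc_subset_Icc_self)
  intro s hs t ht hst
  simp only
  -- notation
  set K : ℝ → E2 → ℝ≥0∞ := fun w ξ => (‖QGN Θ w ξ‖₊ : ℝ≥0∞) with hK
  set D : ℝ≥0∞ := ∫⁻ z in Set.Ioc s t, Xnorm 1 (Θ z) with hD
  set A : ℝ≥0∞ := ∫⁻ ξ : E2, ENNReal.ofReal (Real.exp (-((t - s) * ‖ξ‖))) * ‖Θ s ξ‖₊ with hA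
  set Q : ℝ≥0∞ := ∫⁻ ξ : E2, ENNReal.ofReal (1 - Real.exp (-((t - s) * ‖ξ‖))) * ‖Θ s ξ‖₊ with hQ
  set P : ℝ≥0∞ := ∫⁻ w in Set.Ioc s t, ∫⁻ ξ : E2,
      ENNReal.ofReal (Real.exp (-((t - w) * ‖ξ‖))) * K w ξ with hP
  set R : ℝ≥0∞ := ∫⁻ w in Set.Ioc s t, ∫⁻ ξ : E2,
      ENNReal.ofReal (1 - Real.exp (-((t - w) * ‖ξ‖))) * K w ξ with hR
  have hDtop : D ≠ ⊤ := by
    refine ne_of_lt (lt_of_le_of_lt (lintegral_mono_set fun z hz => ?_) hint)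
    exact ⟨hs.1.trans hz.1.le, hz.2.trans ht.2⟩
  have mThs : Measurable (Θ s) := hmeas.of_uncurry_left
  have mA : Measurable fun ξ : E2 => ENNReal.ofReal (Real.exp (-((t - s) * ‖ξ‖))) * (‖Θ s ξ‖₊ : ℝ≥0∞) :=
    (ENNReal.measurable_ofReal.comp
      (Real.measurable_exp.comp (measurable_norm.const_mul (t - s)).neg)).mul mThs.nnnorm.coe_nnreal_ennreal
  have step1 : Xnorm 0 (Θ t) ≤ A + P := by
    have hpb := pointwise_bound hmeas hmild hJ hs.1 hst ht.2
    calc Xnorm 0 (Θ t) = ∫⁻ ξ : E2, (‖Θ t ξ‖₊ : ℝ≥0∞) := Xnorm_zero_eq _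
      _ ≤ ∫⁻ ξ : E2, (ENNReal.ofReal (Real.exp (-((t - s) * ‖ξ‖))) * ‖Θ s ξ‖₊ +
          ∫⁻ z in Set.Ioc s t, ENNReal.ofReal (Real.exp (-((t - z) * ‖ξ‖))) * ‖QGN Θ z ξ‖₊) :=
          lintegral_mono_ae hpb
      _ = A + ∫⁻ ξ : E2, ∫⁻ z in Set.Ioc s t,
            ENNReal.ofReal (Real.exp (-((t - z) * ‖ξ‖))) * ‖QGN Θ z ξ‖₊ :=
          lintegral_add_left mA _
      _ = A + P := by
          congr 1
          refine lintegral_lintegral_swap (Measurable.aemeasurable ?_)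
          have h : Measurable fun p : E2 × ℝ =>
              ENNReal.ofReal (Real.exp (-((t - p.2) * ‖p.1‖))) * (‖QGN Θ p.2 p.1‖₊ : ℝ≥0∞) :=
            (ENNReal.measurable_ofReal.comp (Real.measurable_exp.comp
              (((measurable_const.sub measurable_snd).mul measurable_fst.norm)).neg)).mul mKswap
          simpa [Function.uncurry, Function.uncurry_def] using h
  -- master measurable functions for step 2
  have mKG : Measurable fun p : (ℝ × ℝ) × E2 => (‖QGN Θ p.1.2 p.2‖₊ : ℝ≥0∞) := by
    have h := mK.comp ((measurable_fst.snd.prodMk measurable_snd) :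
      Measurable fun p : (ℝ × ℝ) × E2 => (p.1.2, p.2))
    simpa [Function.comp_def] using h
  have mG : Measurable fun p : (ℝ × ℝ) × E2 =>
      ENNReal.ofReal (‖p.2‖ * Real.exp (-((p.1.1 - p.1.2) * ‖p.2‖))) * (‖QGN Θ p.1.2 p.2‖₊ : ℝ≥0∞) :=
    (ENNReal.measurable_ofReal.comp
      (measurable_snd.norm.mul (Real.measurable_exp.comp
        (((measurable_fst.fst.sub measurable_fst.snd).mul measurable_snd.norm)).neg))).mul mKG
  have mGite : Measurable fun p : (ℝ × ℝ) × E2 =>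
      (if p.1.2 ≤ p.1.1 then
        ENNReal.ofReal (‖p.2‖ * Real.exp (-((p.1.1 - p.1.2) * ‖p.2‖))) * (‖QGN Θ p.1.2 p.2‖₊ : ℝ≥0∞)
       else 0) :=
    Measurable.ite (measurableSet_le measurable_fst.snd measurable_fst.fst) mG measurable_const
  have mT1 : Measurable fun p : ℝ × E2 =>
      ENNReal.ofReal (‖p.2‖ * Real.exp (-((p.1 - s) * ‖p.2‖))) * (‖Θ s p.2‖₊ : ℝ≥0∞) :=
    (ENNReal.measurable_ofReal.comp
      (measurable_snd.norm.mul (Real.measurable_exp.comp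
        (((measurable_fst.sub measurable_const).mul measurable_snd.norm)).neg))).mul
      (mThs.nnnorm.coe_nnreal_ennreal.comp measurable_snd)
  have step2 : D ≤ Q + R := by
    -- pointwise bound for the X¹ norm at each z ∈ (s,t]
    have hpz : ∀ z ∈ Set.Ioc s t, Xnorm 1 (Θ z) ≤
        (∫⁻ ξ : E2, ENNReal.ofReal (‖ξ‖ * Real.exp (-((z - s) * ‖ξ‖))) * ‖Θ s ξ‖₊) +
        ∫⁻ ξ : E2, ∫⁻ w in Set.Ioc s t,
          (if w ≤ z then ENNReal.ofReal (‖ξ‖ * Real.exp (-((z - w) * ‖ξ‖))) * K w ξ else 0) := by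
      intro z hz
      have hpb := pointwise_bound hmeas hmild hJ hs.1 hz.1.le (hz.2.trans ht.2)
      have hset : Set.Iic z ∩ Set.Ioc s t = Set.Ioc s z := by
        ext w
        simp only [Set.mem_inter_iff, Set.mem_Iic, Set.mem_Ioc]
        exact ⟨fun h => ⟨h.2.1, h.1⟩, fun h => ⟨h.2, h.1, h.2.trans hz.2⟩⟩
      rw [Xnorm_one_eq]
      calc (∫⁻ ξ : E2, ENNReal.ofReal ‖ξ‖ * ‖Θ z ξ‖₊)
          ≤ ∫⁻ ξ : E2, ENNReal.ofReal ‖ξ‖ *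
              (ENNReal.ofReal (Real.exp (-((z - s) * ‖ξ‖))) * ‖Θ s ξ‖₊ +
               ∫⁻ w in Set.Ioc s z, ENNReal.ofReal (Real.exp (-((z - w) * ‖ξ‖))) * ‖QGN Θ w ξ‖₊) :=
            lintegral_mono_ae (hpb.mono fun ξ h => mul_le_mul_right h _)
        _ = ∫⁻ ξ : E2,
              (ENNReal.ofReal (‖ξ‖ * Real.exp (-((z - s) * ‖ξ‖))) * ‖Θ s ξ‖₊ +
               ∫⁻ w in Set.Ioc s t,
                 (if w ≤ z then ENNReal.ofReal (‖ξ‖ * Real.exp (-((z - w) * ‖ξ‖))) * K w ξ else 0)) := by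
            refine lintegral_congr fun ξ => ?_
            rw [mul_add]
            congr 1
            · rw [← mul_assoc, ← ENNReal.ofReal_mul (norm_nonneg ξ)]
            · rw [← lintegral_const_mul' _ _ ENNReal.ofReal_ne_top,
                show Set.Ioc s z = Set.Iic z ∩ Set.Ioc s t from hset.symm,
                ← Measure.restrict_restrict measurableSet_Iic,
                ← lintegral_indicator measurableSet_Iic]
              refine setLIntegral_congr_fun measurableSet_Ioc
                (fun w _ => ?_)
              rw [Set.indicator_apply]
              simp only [Set.mem_Iic, hK]
              split_ifs with h
              · rw [← mul_assoc, ← ENNReal.ofReal_mul (norm_nonneg ξ)]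
              · rfl
        _ = _ := lintegral_add_left (mT1.comp (measurable_const.prodMk measurable_id)) _
    -- integrate the first term: dissipation of Θ(s)
    have hT1int : (∫⁻ z in Set.Ioc s t,
        ∫⁻ ξ : E2, ENNReal.ofReal (‖ξ‖ * Real.exp (-((z - s) * ‖ξ‖))) * ‖Θ s ξ‖₊) = Q := by
      rw [hQ]
      have hswap : (∫⁻ z in Set.Ioc s t,
          ∫⁻ ξ : E2, ENNReal.ofReal (‖ξ‖ * Real.exp (-((z - s) * ‖ξ‖))) * ‖Θ s ξ‖₊) =
          ∫⁻ ξ : E2, ∫⁻ z in Set.Ioc s t,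
            ENNReal.ofReal (‖ξ‖ * Real.exp (-((z - s) * ‖ξ‖))) * ‖Θ s ξ‖₊ := by
        refine lintegral_lintegral_swap (Measurable.aemeasurable ?_)
        simpa [Function.uncurry, Function.uncurry_def] using mT1
      rw [hswap]
      refine lintegral_congr fun ξ => ?_
      rw [lintegral_mul_const' _ _ ENNReal.coe_ne_top, lint_exp ‖ξ‖ (norm_nonneg ξ) hst]
    -- integrate the second term: total nonlinear contribution
    have hT2int : (∫⁻ z in Set.Ioc s t, ∫⁻ ξ : E2, ∫⁻ w in Set.Ioc s t,
        (if w ≤ z then ENNReal.ofReal (‖ξ‖ * Real.exp (-((z - w) * ‖ξ‖))) * K w ξ else 0)) = R := by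
      rw [hR]
      -- swap ξ and w inside
      have h1 : (∫⁻ z in Set.Ioc s t, ∫⁻ ξ : E2, ∫⁻ w in Set.Ioc s t,
          (if w ≤ z then ENNReal.ofReal (‖ξ‖ * Real.exp (-((z - w) * ‖ξ‖))) * K w ξ else 0)) =
          ∫⁻ z in Set.Ioc s t, ∫⁻ w in Set.Ioc s t, ∫⁻ ξ : E2,
          (if w ≤ z then ENNReal.ofReal (‖ξ‖ * Real.exp (-((z - w) * ‖ξ‖))) * K w ξ else 0) := by
        refine lintegral_congr fun z => ?_
        refine lintegral_lintegral_swap (Measurable.aemeasurable ?_)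
        have h := mGite.comp (((measurable_const.prodMk measurable_snd).prodMk measurable_fst :
          Measurable fun p : E2 × ℝ => ((z, p.2), p.1)))
        simpa [Function.comp_def, Function.uncurry, Function.uncurry_def, hK] using h
      -- swap z and w
      have h2 : (∫⁻ z in Set.Ioc s t, ∫⁻ w in Set.Ioc s t, ∫⁻ ξ : E2,
          (if w ≤ z then ENNReal.ofReal (‖ξ‖ * Real.exp (-((z - w) * ‖ξ‖))) * K w ξ else 0)) =
          ∫⁻ w in Set.Ioc s t, ∫⁻ z in Set.Ioc s t, ∫⁻ ξ : E2,
          (if w ≤ z then ENNReal.ofReal (‖ξ‖ * Real.exp (-((z - w) * ‖ξ‖))) * K w ξ else 0) := by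
        refine lintegral_lintegral_swap (Measurable.aemeasurable ?_)
        have h := Measurable.lintegral_prod_right' (ν := (volume : Measure E2)) mGite
        simpa [Function.uncurry, Function.uncurry_def, hK] using h
      rw [h1, h2]
      -- now compute the inner z-integral for each w
      refine setLIntegral_congr_fun measurableSet_Ioc (fun w hw => ?_)
      have hsetw : Set.Ici w ∩ Set.Ioc s t = Set.Icc w t := by
        ext z
        simp only [Set.mem_inter_iff, Set.mem_Ici, Set.mem_Ioc, Set.mem_Icc]
        exact ⟨fun h => ⟨h.1, h.2.2⟩, fun h => ⟨h.1, hw.1.trans_le h.1, h.2⟩⟩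
      calc (∫⁻ z in Set.Ioc s t, ∫⁻ ξ : E2,
            (if w ≤ z then ENNReal.ofReal (‖ξ‖ * Real.exp (-((z - w) * ‖ξ‖))) * K w ξ else 0))
          = ∫⁻ z in Set.Ioc s t, (Set.Ici w).indicator
              (fun z => ∫⁻ ξ : E2, ENNReal.ofReal (‖ξ‖ * Real.exp (-((z - w) * ‖ξ‖))) * K w ξ) z := by
            refine lintegral_congr fun z => ?_
            rw [Set.indicator_apply]
            simp only [Set.mem_Ici]
            split_ifs with h
            · rfl
            · simp
        _ = ∫⁻ z in Set.Ioc w t, ∫⁻ ξ : E2,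
              ENNReal.ofReal (‖ξ‖ * Real.exp (-((z - w) * ‖ξ‖))) * K w ξ := by
            rw [lintegral_indicator measurableSet_Ici, Measure.restrict_restrict measurableSet_Ici,
              hsetw, ← Measure.restrict_congr_set Ioc_ae_eq_Icc]
        _ = ∫⁻ ξ : E2, ∫⁻ z in Set.Ioc w t,
              ENNReal.ofReal (‖ξ‖ * Real.exp (-((z - w) * ‖ξ‖))) * K w ξ := by
            refine lintegral_lintegral_swap (Measurable.aemeasurable ?_)
            have h := mG.comp (((measurable_fst.prodMk measurable_const).prodMk measurable_snd :
              Measurable fun p : ℝ × E2 => ((p.1, w), p.2)))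
            simpa [Function.comp_def, Function.uncurry, Function.uncurry_def, hK] using h
        _ = ∫⁻ ξ : E2, ENNReal.ofReal (1 - Real.exp (-((t - w) * ‖ξ‖))) * K w ξ := by
            refine lintegral_congr fun ξ => ?_
            have hKne : K w ξ ≠ ⊤ := by rw [hK]; exact ENNReal.coe_ne_top
            rw [lintegral_mul_const' _ _ hKne, lint_exp ‖ξ‖ (norm_nonneg ξ) (hw.2 : w ≤ t)]
    calc D ≤ ∫⁻ z in Set.Ioc s t,
          ((∫⁻ ξ : E2, ENNReal.ofReal (‖ξ‖ * Real.exp (-((z - s) * ‖ξ‖))) * ‖Θ s ξ‖₊) +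
           ∫⁻ ξ : E2, ∫⁻ w in Set.Ioc s t,
             (if w ≤ z then ENNReal.ofReal (‖ξ‖ * Real.exp (-((z - w) * ‖ξ‖))) * K w ξ else 0)) := by
          rw [hD]
          exact setLIntegral_mono' measurableSet_Ioc hpz
      _ = Q + R := by
          have hm : Measurable fun z : ℝ =>
              ∫⁻ ξ : E2, ENNReal.ofReal (‖ξ‖ * Real.exp (-((z - s) * ‖ξ‖))) * ‖Θ s ξ‖₊ := by
            have h := Measurable.lintegral_prod_right' (ν := (volume : Measure E2)) mT1
            simpa using h
          rw [lintegral_add_left hm, hT1int, hT2int]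
  have step3 : A + Q = Xnorm 0 (Θ s) := by
    rw [Xnorm_zero_eq, hA, hQ, ← lintegral_add_left mA]
    refine lintegral_congr fun ξ => ?_
    rw [← add_mul, ← ENNReal.ofReal_add (Real.exp_pos _).le
      (by
        rw [sub_nonneg]
        exact Real.exp_le_one_iff.2 (neg_nonpos.2 (mul_nonneg (sub_nonneg.2 hst) (norm_nonneg ξ)))),
      add_sub_cancel, ENNReal.ofReal_one, one_mul]
  have mPin : Measurable fun p : ℝ × E2 =>
      ENNReal.ofReal (Real.exp (-((t - p.1) * ‖p.2‖))) * (‖QGN Θ p.1 p.2‖₊ : ℝ≥0∞) :=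
    (ENNReal.measurable_ofReal.comp (Real.measurable_exp.comp
      (((measurable_const.sub measurable_fst).mul measurable_snd.norm)).neg)).mul mK
  have step4 : P + R ≤ D := by
    have hadd : P + R = ∫⁻ w in Set.Ioc s t,
        ((∫⁻ ξ : E2, ENNReal.ofReal (Real.exp (-((t - w) * ‖ξ‖))) * K w ξ) +
         (∫⁻ ξ : E2, ENNReal.ofReal (1 - Real.exp (-((t - w) * ‖ξ‖))) * K w ξ)) := by
      have hPmeas : Measurable fun w : ℝ =>
          ∫⁻ ξ : E2, ENNReal.ofReal (Real.exp (-((t - w) * ‖ξ‖))) * K w ξ := by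
        have h := Measurable.lintegral_prod_right' (ν := (volume : Measure E2)) mPin
        simpa using h
      rw [hP, hR, ← lintegral_add_left hPmeas]
    rw [hadd]
    calc (∫⁻ w in Set.Ioc s t,
        ((∫⁻ ξ : E2, ENNReal.ofReal (Real.exp (-((t - w) * ‖ξ‖))) * K w ξ) +
         (∫⁻ ξ : E2, ENNReal.ofReal (1 - Real.exp (-((t - w) * ‖ξ‖))) * K w ξ)))
        = ∫⁻ w in Set.Ioc s t, ∫⁻ ξ : E2, K w ξ := by
          refine setLIntegral_congr_fun measurableSet_Ioc
            (fun w hw => ?_)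
          have mB : Measurable fun ξ : E2 =>
              ENNReal.ofReal (Real.exp (-((t - w) * ‖ξ‖))) * K w ξ := by
            have h := mPin.comp ((measurable_const.prodMk measurable_id) :
              Measurable fun ξ : E2 => (w, ξ))
            simpa [Function.comp_def, hK] using h
          rw [← lintegral_add_left mB]
          refine lintegral_congr fun ξ => ?_
          rw [← add_mul, ← ENNReal.ofReal_add (Real.exp_pos _).le
            (by
              rw [sub_nonneg]
              exact Real.exp_le_one_iff.2 (neg_nonpos.2
                (mul_nonneg (sub_nonneg.2 hw.2) (norm_nonneg ξ)))),
            add_sub_cancel, ENNReal.ofReal_one, one_mul]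
      _ ≤ ∫⁻ w in Set.Ioc s t, Xnorm 1 (Θ w) :=
          setLIntegral_mono' measurableSet_Ioc fun w hw =>
            hSle w ⟨hs.1.trans hw.1.le, hw.2.trans ht.2⟩
      _ = D := hD.symm
  have chain : Xnorm 0 (Θ t) + D ≤ Xnorm 0 (Θ s) + D := by
    calc Xnorm 0 (Θ t) + D ≤ (A + P) + (Q + R) := add_le_add step1 step2
      _ = (A + Q) + (P + R) := by ring
      _ ≤ Xnorm 0 (Θ s) + D := by rw [step3]; exact add_le_add_right step4 _
  exact (ENNReal.add_le_add_iff_right hDtop).1 chain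

end
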